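/- The minimax value over densities g of sup_D ∬ [log D(X)+log(1−D(Y))] f(X) g(Y) dX dY is attained at g = f, where the inner supremum is over measurable D : ℝ^d → (0,1); equivalently, the function g ↦ ∫ [f log(f/(f+g)) + g log(g/(f+g))] is minimized uniquely at g = f, with minimal value −2 log 2 (i.e., the Jensen–Shannon divergence between f and g is nonnegative and zero iff f = g). -/
import Mathlib

open MeasureTheory

lemma mul_log_div_ge {x y : ℝ} (hx : 0 ≤ x) (hy : 0 < y) :
    x - y ≤ x * Real.log (x / y) := by
  rcases eq_or_lt_of_le hx with h0 | hxpos
  · simp [← h0]; linarith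
  · have h : Real.log (y / x) ≤ y / x - 1 := Real.log_le_sub_one_of_pos (by positivity)
    have hlog : Real.log (x / y) = - Real.log (y / x) := by
      rw [← Real.log_inv, inv_div]
    rw [hlog]
    have h2 := mul_le_mul_of_nonneg_left h (le_of_lt hxpos)
    have hx' : x * (y / x - 1) = y - x := by field_simp
    nlinarith

lemma mul_log_div_gt {x y : ℝ} (hx : 0 ≤ x) (hy : 0 < y) (hne : x ≠ y) :
    x - y < x * Real.log (x / y) := by
  rcases eq_or_lt_of_le hx with h0 | hxpos
  · simp [← h0]; linarith
  · have hne' : y / x ≠ 1 := by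
      intro h; apply hne; field_simp at h; linarith
    have h : Real.log (y / x) < y / x - 1 := Real.log_lt_sub_one_of_pos (by positivity) hne'
    have hlog : Real.log (x / y) = - Real.log (y / x) := by
      rw [← Real.log_inv, inv_div]
    rw [hlog]
    have h2 := mul_lt_mul_of_pos_left h hxpos
    have hx' : x * (y / x - 1) = y - x := by field_simp
    nlinarith

lemma key_shift {a b : ℝ} (ha : 0 ≤ a) (hs : 0 < a + b) :
    a * Real.log (a / (a + b)) + a * Real.log 2 = a * Real.log (a / ((a + b) / 2)) := by
  rcases eq_or_lt_of_le ha with h0 | hapos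
  · simp [← h0]
  · have h1 : a / ((a + b) / 2) = (a / (a + b)) * 2 := by field_simp; try ring
    rw [h1, Real.log_mul (by positivity) two_ne_zero]; try ring

lemma key_nonneg {a b : ℝ} (ha : 0 ≤ a) (hb : 0 ≤ b) (hs : 0 < a + b) :
    0 ≤ a * Real.log (a / (a + b)) + b * Real.log (b / (a + b)) + (a + b) * Real.log 2 := by
  have hy : 0 < (a + b) / 2 := by linarith
  have h1 := mul_log_div_ge ha hy
  have h2 := mul_log_div_ge hb hy
  have e1 := key_shift ha hs
  have e2 : b * Real.log (b / (a + b)) + b * Real.log 2 = b * Real.log (b / ((a + b) / 2)) := by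
    have := key_shift hb (by linarith : 0 < b + a)
    rw [add_comm b a] at this; exact this
  nlinarith

lemma key_eq {a b : ℝ} (ha : 0 ≤ a) (hb : 0 ≤ b) (hs : 0 < a + b)
    (heq : a * Real.log (a / (a + b)) + b * Real.log (b / (a + b)) + (a + b) * Real.log 2 = 0) :
    a = b := by
  have hy : 0 < (a + b) / 2 := by linarith
  by_contra hne
  have hane : a ≠ (a + b) / 2 ∨ b ≠ (a + b) / 2 := by
    by_contra h
    push_neg at h
    exact hne (by linarith [h.1, h.2])
  have e1 := key_shift ha hs
  have e2 : b * Real.log (b / (a + b)) + b * Real.log 2 = b * Real.log (b / ((a + b) / 2)) := by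
    have := key_shift hb (by linarith : 0 < b + a)
    rw [add_comm b a] at this; exact this
  rcases hane with h | h
  · have h1 := mul_log_div_gt ha hy h
    have h2 := mul_log_div_ge hb hy
    nlinarith
  · have h1 := mul_log_div_ge ha hy
    have h2 := mul_log_div_gt hb hy h
    nlinarith

/-- The function `g ↦ ∫ [f log(f/(f+g)) + g log(g/(f+g))]` over probability densities is
minimized uniquely (up to a.e. equality) at `g = f`, with minimal value `−2 log 2`. -/
theorem jensen_shannon_min_at_f {d : ℕ}
    (f g : (Fin d → ℝ) → ℝ)
    (hfint : Integrable f) (hgint : Integrable g)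
    (hf0 : ∀ x, 0 ≤ f x) (hg0 : ∀ x, 0 ≤ g x)
    (hf1 : ∫ x, f x = 1) (hg1 : ∫ x, g x = 1)
    (hfgpos : ∀ x, 0 < f x + g x)
    (hint : Integrable (fun x =>
      f x * Real.log (f x / (f x + g x)) + g x * Real.log (g x / (f x + g x)))) :
    (-(2 * Real.log 2) ≤
        ∫ x, (f x * Real.log (f x / (f x + g x)) + g x * Real.log (g x / (f x + g x)))) ∧
    (∫ x, (f x * Real.log (f x / (f x + f x)) + f x * Real.log (f x / (f x + f x)))
        = -(2 * Real.log 2)) ∧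
    ((∫ x, (f x * Real.log (f x / (f x + g x)) + g x * Real.log (g x / (f x + g x))))
        = -(2 * Real.log 2) → g =ᵐ[volume] f) := by
  set φ : (Fin d → ℝ) → ℝ := fun x =>
    f x * Real.log (f x / (f x + g x)) + g x * Real.log (g x / (f x + g x)) with hφ
  set F : (Fin d → ℝ) → ℝ := fun x => φ x + (f x + g x) * Real.log 2 with hF
  have hFnn : ∀ x, 0 ≤ F x := fun x => by
    simpa [hF, hφ, add_assoc] using key_nonneg (hf0 x) (hg0 x) (hfgpos x)
  have hFint : Integrable F := hint.add ((hfint.add hgint).mul_const _)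
  have hsumint : Integrable (fun x => (f x + g x) * Real.log 2) :=
    (hfint.add hgint).mul_const _
  have hintF : ∫ x, F x = (∫ x, φ x) + 2 * Real.log 2 := by
    rw [hF]
    rw [integral_add hint hsumint]
    congr 1
    rw [integral_mul_const]
    rw [integral_add hfint hgint, hf1, hg1]
    ring
  have hFnonneg : 0 ≤ ∫ x, F x := integral_nonneg hFnn
  refine ⟨by linarith [hFnonneg, hintF.symm ▸ hFnonneg, hintF ▸ hFnonneg], ?_, ?_⟩
  · have heq : ∀ x, f x * Real.log (f x / (f x + f x)) + f x * Real.log (f x / (f x + f x))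
        = -(2 * Real.log 2) * f x := by
      intro x
      rcases eq_or_lt_of_le (hf0 x) with h0 | hpos
      · simp [← h0]
      · have h1 : f x / (f x + f x) = 1 / 2 := by field_simp; try ring
        rw [h1]
        rw [show (1:ℝ)/2 = 2⁻¹ by norm_num, Real.log_inv]
        ring
    simp_rw [heq]
    rw [integral_const_mul, hf1, mul_one]
  · intro h
    have hF0 : ∫ x, F x = 0 := by rw [hintF]; rw [hφ] at h; rw [h]; ring
    have hFae : F =ᵐ[volume] 0 :=
      (integral_eq_zero_iff_of_nonneg hFnn hFint).mp hF0
    filter_upwards [hFae] with x hx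
    have : f x = g x := by
      apply key_eq (hf0 x) (hg0 x) (hfgpos x)
      have : F x = 0 := hx
      rw [hF, hφ] at this
      simpa [add_assoc] using this
    exact this.symm
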